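/- Let f ∈ ℝ[x,y,z] be homogeneous of degree 4 defining a smooth complex plane quartic Q = V(f), and let L = V(ℓ) be a split real bitangent of Q with distinct real tangency points p₁ ≠ p₂, with real homogeneous representatives p̂₁, p̂₂ ∈ ℝ³ ∖ {0}. Let L∞ = V(ℓ∞) and M = V(ℓ_M) be real lines satisfying ℓ∞(p̂ᵢ) ≠ 0 and ℓ_M(p̂ᵢ) ≠ 0 for i = 1, 2. Then Qtype_{L∞}(L) · Qtype_M(L) = sign( ℓ∞(p̂₁) · ℓ∞(p̂₂) · ℓ_M(p̂₁) · ℓ_M(p̂₂) ). Equivalently, Qtype_{L∞}(L) = Qtype_M(L) if and only if the line L∞ does not separate p₁ from p₂ in the affine plane ℙ²(ℝ) ∖ M, i.e. if and only if L∞ does not meet the grate of L with respect to M (the closed segment joining p₁ and p₂ in ℙ²(ℝ) ∖ M). -/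

import Mathlib

open MvPolynomial

noncomputable section

/-- Complexification of a real ternary polynomial. -/
def cmap (f : MvPolynomial (Fin 3) ℝ) : MvPolynomial (Fin 3) ℂ :=
  MvPolynomial.map (algebraMap ℝ ℂ) f

/-- Evaluation of the complexification of `f` at a complex point. -/
def cev (f : MvPolynomial (Fin 3) ℝ) (p : Fin 3 → ℂ) : ℂ :=
  eval p (cmap f)

/-- The linear form with coefficient vector `ℓ`, evaluated at `p`. -/
def lin {R : Type*} [CommSemiring R] (ℓ p : Fin 3 → R) : R := ∑ i, ℓ i * p i

/-- The complexification of a real vector. -/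
def cvec (v : Fin 3 → ℝ) : Fin 3 → ℂ := fun i => (v i : ℂ)

/-- Smoothness of the complex plane curve V(f): the gradient is nonzero at every
nonzero complex zero of `f`. -/
def SmoothQuartic (f : MvPolynomial (Fin 3) ℝ) : Prop :=
  ∀ p : Fin 3 → ℂ, p ≠ 0 → cev f p = 0 → ∃ i, eval p (pderiv i (cmap f)) ≠ 0

/-- The line `V(ℓ)` is a bitangent of `V(f)` with tangency points `z₁, z₂`:
the restriction of `f` to the line is a nonzero scalar multiple of the square of a
nonzero quadratic form on the line, whose zeros (with multiplicity) are `z₁, z₂`.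
Over ℂ the quadratic form is written as the product of two linear forms `m₁, m₂`,
each nonzero on the line and vanishing at the corresponding tangency point. -/
def IsBitangentAt (f : MvPolynomial (Fin 3) ℝ) (ℓ z₁ z₂ : Fin 3 → ℂ) : Prop :=
  ℓ ≠ 0 ∧ z₁ ≠ 0 ∧ z₂ ≠ 0 ∧ lin ℓ z₁ = 0 ∧ lin ℓ z₂ = 0 ∧
  ∃ (m₁ m₂ : Fin 3 → ℂ) (c : ℂ), c ≠ 0 ∧
    lin m₁ z₁ = 0 ∧ lin m₂ z₂ = 0 ∧
    (∃ p, lin ℓ p = 0 ∧ lin m₁ p ≠ 0) ∧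
    (∃ p, lin ℓ p = 0 ∧ lin m₂ p ≠ 0) ∧
    (∀ p, lin ℓ p = 0 → cev f p = c * (lin m₁ p * lin m₂ p) ^ 2)

/-- The line `V(ℓ)` is a bitangent of the quartic `V(f)`. -/
def IsBitangent (f : MvPolynomial (Fin 3) ℝ) (ℓ : Fin 3 → ℂ) : Prop :=
  ∃ z₁ z₂, IsBitangentAt f ℓ z₁ z₂

/-- The set of real bitangent lines of `V(f)`, as points of the real projective
plane of lines. -/
def realBitangents (f : MvPolynomial (Fin 3) ℝ) :
    Set (Projectivization ℝ (Fin 3 → ℝ)) :=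
  {L | IsBitangent f (cvec L.rep)}

/-- Directional derivative of (the complexification of) `f` along the real vector `v`. -/
def Dv (f : MvPolynomial (Fin 3) ℝ) (v : Fin 3 → ℝ) (z : Fin 3 → ℂ) : ℂ :=
  ∑ i, (v i : ℂ) * eval z (pderiv i (cmap f))

/-- `Qtype_{L∞}(L) = ε ∈ {+1, -1}` for the real bitangent `L = V(ℓ)` of `V(f)`,
relative to the real line at infinity `V(ℓinf)`: for tangency points normalized so
that `ℓ∞(z̃ᵢ) = 1` and any real `v` with `ℓ(v) ≠ 0`, the product
`(D_v f)(z̃₁)·(D_v f)(z̃₂)` is a nonzero real number of sign `ε`. -/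
def HasQtype (f : MvPolynomial (Fin 3) ℝ) (ℓinf : Fin 3 → ℝ) (ℓ : Fin 3 → ℂ)
    (ε : ℤ) : Prop :=
  ∃ (z₁ z₂ : Fin 3 → ℂ) (v : Fin 3 → ℝ) (r : ℝ),
    IsBitangentAt f ℓ z₁ z₂ ∧
    lin (cvec ℓinf) z₁ = 1 ∧ lin (cvec ℓinf) z₂ = 1 ∧
    lin ℓ (cvec v) ≠ 0 ∧
    Dv f v z₁ * Dv f v z₂ = (r : ℂ) ∧
    ((0 < r ∧ ε = 1) ∨ (r < 0 ∧ ε = -1))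

/-- A point of ℙ²(ℂ) (given by a nonzero vector) is real. -/
def IsRealPoint (z : Fin 3 → ℂ) : Prop :=
  ∃ (w : Fin 3 → ℝ) (t : ℂ), w ≠ 0 ∧ t ≠ 0 ∧ z = t • cvec w


lemma prop3 {K : Type*} [Field K] {a b : Fin 3 → K}
    (h : ∀ i j, a i * b j = a j * b i) (ha : a ≠ 0) : ∃ t : K, b = t • a := by
  obtain ⟨k, hk⟩ : ∃ k, a k ≠ 0 := by
    by_contra hc; push_neg at hc; exact ha (funext hc)
  refine ⟨b k / a k, funext fun i => ?_⟩
  have := h i k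
  rw [Pi.smul_apply, smul_eq_mul, div_mul_eq_mul_div, eq_div_iff hk]
  linear_combination -this

lemma lin_comm {K : Type*} [CommSemiring K] (a b : Fin 3 → K) : lin a b = lin b a := by
  simp [lin, mul_comm]

lemma lin_smul {K : Type*} [CommSemiring K] (a b : Fin 3 → K) (t : K) :
    lin a (t • b) = t * lin a b := by
  simp only [lin, Pi.smul_apply, smul_eq_mul, Finset.mul_sum]; apply Finset.sum_congr rfl
  intro i _; ring

lemma ker_le_ker {K : Type*} [Field K] {ℓ g : Fin 3 → K} (hℓ : ℓ ≠ 0)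
    (h : ∀ w, lin ℓ w = 0 → lin g w = 0) : ∃ t : K, g = t • ℓ := by
  apply prop3 (a := ℓ) (b := g) ?_ hℓ
  intro i j
  classical
  have hw : lin ℓ (fun k => ℓ j * (if k = i then 1 else 0) - ℓ i * (if k = j then 1 else 0)) = 0 := by
    simp [lin, mul_sub, Finset.sum_sub_distrib, mul_ite, mul_zero, mul_one,
      Finset.sum_ite_eq', mul_comm]
  have h2 := h _ hw
  simp [lin, mul_sub, Finset.sum_sub_distrib, mul_ite, mul_zero, mul_one,
      Finset.sum_ite_eq'] at h2
  linear_combination -h2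

def lineComp (z w : Fin 3 → ℂ) (g : MvPolynomial (Fin 3) ℂ) : Polynomial ℂ :=
  MvPolynomial.aeval (fun i => Polynomial.C (z i) + Polynomial.C (w i) * Polynomial.X) g

lemma lineComp_add (z w : Fin 3 → ℂ) (p q : MvPolynomial (Fin 3) ℂ) :
    lineComp z w (p + q) = lineComp z w p + lineComp z w q := map_add _ _ _

lemma lineComp_mul (z w : Fin 3 → ℂ) (p q : MvPolynomial (Fin 3) ℂ) :
    lineComp z w (p * q) = lineComp z w p * lineComp z w q := map_mul _ _ _

lemma lineComp_C (z w : Fin 3 → ℂ) (a : ℂ) :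
    lineComp z w (C a) = Polynomial.C a := by simp [lineComp]

lemma lineComp_X (z w : Fin 3 → ℂ) (j : Fin 3) :
    lineComp z w (X j) = Polynomial.C (z j) + Polynomial.C (w j) * Polynomial.X := by
  simp [lineComp]

lemma lineComp_eval (z w : Fin 3 → ℂ) (g : MvPolynomial (Fin 3) ℂ) (t : ℂ) :
    (lineComp z w g).eval t = eval (fun i => z i + t * w i) g := by
  induction g using MvPolynomial.induction_on with
  | C a => simp [lineComp_C]
  | add p q hp hq => simp [lineComp_add, hp, hq]
  | mul_X p j hp =>
      rw [lineComp_mul, Polynomial.eval_mul, hp, lineComp_X]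
      simp only [map_mul, eval_X, Polynomial.eval_add, Polynomial.eval_mul, Polynomial.eval_C,
        Polynomial.eval_X]
      ring

lemma lineComp_coeff0 (z w : Fin 3 → ℂ) (g : MvPolynomial (Fin 3) ℂ) :
    (lineComp z w g).coeff 0 = eval z g := by
  rw [Polynomial.coeff_zero_eq_eval_zero, lineComp_eval]
  simp

lemma lineComp_coeff1 (z w : Fin 3 → ℂ) (g : MvPolynomial (Fin 3) ℂ) :
    (lineComp z w g).coeff 1 = ∑ i, w i * eval z (pderiv i g) := by
  induction g using MvPolynomial.induction_on with
  | C a => simp [lineComp_C]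
  | add p q hp hq =>
      rw [lineComp_add, Polynomial.coeff_add, hp, hq, ← Finset.sum_add_distrib]
      apply Finset.sum_congr rfl; intro i _
      simp [mul_add]
  | mul_X p j hp =>
      rw [lineComp_mul, lineComp_X]
      rw [mul_add, Polynomial.coeff_add, Polynomial.coeff_mul_C, mul_comm (Polynomial.C (w j)) _,
        ← mul_assoc, Polynomial.coeff_mul_C, Polynomial.coeff_mul_X, hp, lineComp_coeff0]
      have hX : ∀ i : Fin 3, eval z (pderiv i (X j : MvPolynomial (Fin 3) ℂ))
          = if i = j then 1 else 0 := by
        intro i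
        by_cases h : i = j
        · subst h; simp [pderiv_X_self]
        · simp [pderiv_X_of_ne (Ne.symm h), h]
      simp only [pderiv_mul, map_add, map_mul, eval_X, hX, mul_ite, mul_one, mul_zero,
        mul_add, Finset.sum_add_distrib, Finset.sum_ite_eq', Finset.mem_univ, if_true]
      rw [Finset.sum_mul]
      apply congrArg₂
      · apply Finset.sum_congr rfl; intro i _; ring
      · ring

lemma my_degree_add (a b : Fin 3 →₀ ℕ) :
    Finsupp.degree (a + b) = Finsupp.degree a + Finsupp.degree b := by
  simp [Finsupp.degree_eq_weight_one, map_add]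

lemma my_degree_single (i : Fin 3) : Finsupp.degree (Finsupp.single i 1) = 1 := by
  rw [Finsupp.degree_apply, Finsupp.support_single_ne_zero _ one_ne_zero, Finset.sum_singleton,
    Finsupp.single_eq_same]

lemma homog_eval_smul {n : ℕ} {φ : MvPolynomial (Fin 3) ℂ} (h : φ.IsHomogeneous n)
    (t : ℂ) (z : Fin 3 → ℂ) : eval (t • z) φ = t ^ n * eval z φ := by
  rw [eval_eq', eval_eq', Finset.mul_sum]
  apply Finset.sum_congr rfl
  intro d hd
  have hdeg : d.degree = n := by
    by_contra hne
    exact (mem_support_iff.mp hd) (h.coeff_eq_zero hne)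
  have hp : ∏ i, (t • z) i ^ d i = t ^ n * ∏ i, z i ^ d i := by
    simp only [Pi.smul_apply, smul_eq_mul, mul_pow, Finset.prod_mul_distrib]
    congr 1
    rw [Finset.prod_pow_eq_pow_sum]
    congr 1
    rw [← hdeg, Finsupp.degree_apply]
    exact (Finset.sum_subset (Finset.subset_univ _)
      (fun x _ hx => Finsupp.notMem_support_iff.mp hx)).symm
  rw [hp]; ring

lemma homog_pderiv {n : ℕ} {φ : MvPolynomial (Fin 3) ℂ} (h : φ.IsHomogeneous (n + 1))
    (i : Fin 3) : (pderiv i φ).IsHomogeneous n := by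
  have hrepr : pderiv i φ = ∑ d ∈ φ.support, pderiv i (monomial d (coeff d φ)) := by
    rw [← map_sum, support_sum_monomial_coeff]
  rw [hrepr]
  apply MvPolynomial.IsHomogeneous.sum
  intro d hd
  rw [pderiv_monomial]
  by_cases hz : d i = 0
  · rw [hz]
    simp only [Nat.cast_zero, mul_zero, map_zero]
    exact isHomogeneous_zero _ _ _
  · apply isHomogeneous_monomial
    have hle : Finsupp.single i 1 ≤ d :=
      Finsupp.single_le_iff.mpr (Nat.one_le_iff_ne_zero.mpr hz)
    have hc : (d - Finsupp.single i 1) + Finsupp.single i 1 = d :=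
      tsub_add_cancel_of_le hle
    have hdeg : d.degree = n + 1 := by
      by_contra hne
      exact (mem_support_iff.mp hd) (h.coeff_eq_zero hne)
    have := congrArg Finsupp.degree hc
    rw [my_degree_add, my_degree_single, hdeg] at this
    omega


def xcross (a b : Fin 3 → ℂ) : Fin 3 → ℂ :=
  ![a 1 * b 2 - a 2 * b 1, a 2 * b 0 - a 0 * b 2, a 0 * b 1 - a 1 * b 0]

lemma xcross_triple (a b c : Fin 3 → ℂ) (i : Fin 3) :
    xcross a (xcross b c) i = b i * lin a c - c i * lin a b := by
  fin_cases i <;> simp [xcross, lin, Fin.sum_univ_three] <;> ring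

lemma xcross_zero_prop {z p : Fin 3 → ℂ} (h : xcross z p = 0) (hz : z ≠ 0) :
    ∃ t : ℂ, p = t • z := by
  have h0 := congrFun h 0
  have h1 := congrFun h 1
  have h2 := congrFun h 2
  simp [xcross, sub_eq_zero] at h0 h1 h2
  apply prop3 ?_ hz
  intro i j
  fin_cases i <;> fin_cases j <;>
    simp only [Fin.zero_eta, Fin.mk_one, Fin.reduceFinMk] <;>
    first
      | ring1
      | linear_combination h0
      | linear_combination h1
      | linear_combination h2
      | linear_combination -h0
      | linear_combination -h1
      | linear_combination -h2

lemma xcross_swap {a b : Fin 3 → ℂ} (h : xcross a b = 0) : xcross b a = 0 := by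
  funext i
  have := congrFun h i
  fin_cases i <;> simp [xcross] at * <;> linear_combination -this

lemma lin_smul_left {K : Type*} [CommSemiring K] (a b : Fin 3 → K) (t : K) :
    lin (t • a) b = t * lin a b := by
  simp only [lin, Pi.smul_apply, smul_eq_mul, Finset.mul_sum]
  apply Finset.sum_congr rfl; intro i _; ring

lemma line_point_unique {ℓ m z p : Fin 3 → ℂ} (hℓ : ℓ ≠ 0) (hz : z ≠ 0)
    (hℓz : lin ℓ z = 0) (hmz : lin m z = 0)
    (hq : ∃ q, lin ℓ q = 0 ∧ lin m q ≠ 0)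
    (hℓp : lin ℓ p = 0) (hmp : lin m p = 0) : ∃ t : ℂ, p = t • z := by
  by_cases hc : xcross z p = 0
  · exact xcross_zero_prop hc hz
  · exfalso
    obtain ⟨q, hq1, hq2⟩ := hq
    have hcl : xcross ℓ (xcross z p) = 0 := by
      funext i; rw [xcross_triple, hℓp, hℓz]; simp
    have hcm : xcross m (xcross z p) = 0 := by
      funext i; rw [xcross_triple, hmp, hmz]; simp
    obtain ⟨t, htl⟩ := xcross_zero_prop (xcross_swap hcl) hc
    obtain ⟨u, htm⟩ := xcross_zero_prop (xcross_swap hcm) hc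
    have ht : t ≠ 0 := fun h0 => hℓ (by rw [htl, h0, zero_smul])
    have h1 : t * lin (xcross z p) q = 0 := by rw [← lin_smul_left, ← htl, hq1]
    have h2 : lin (xcross z p) q = 0 := by
      rcases mul_eq_zero.mp h1 with h | h
      · exact absurd h ht
      · exact h
    exact hq2 (by rw [htm, lin_smul_left, h2, mul_zero])


lemma lin_add_mul {K : Type*} [CommSemiring K] (a z w : Fin 3 → K) (t : K) :
    lin a (fun i => z i + t * w i) = lin a z + t * lin a w := by
  simp only [lin, mul_add, Finset.sum_add_distrib, Finset.mul_sum]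
  congr 1
  apply Finset.sum_congr rfl; intro i _; ring

lemma cev_real (g : MvPolynomial (Fin 3) ℝ) (p : Fin 3 → ℝ) :
    eval (cvec p) (cmap g) = ((eval p g : ℝ) : ℂ) := by
  rw [cmap, eval_map]
  have hc : cvec p = (algebraMap ℝ ℂ) ∘ p := rfl
  have h := eval₂_comp_left (algebraMap ℝ ℂ) (RingHom.id ℝ) p g
  rw [RingHom.comp_id] at h
  rw [hc, ← h]
  rfl

lemma pderiv_cmap (g : MvPolynomial (Fin 3) ℝ) (i : Fin 3) :
    pderiv i (cmap g) = cmap (pderiv i g) := by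
  rw [cmap, cmap, pderiv_map]

lemma grad_vanish (f : MvPolynomial (Fin 3) ℝ) {ℓ z m₁ m₂ : Fin 3 → ℂ} {c : ℂ}
    (hline : ∀ p, lin ℓ p = 0 → cev f p = c * (lin m₁ p * lin m₂ p) ^ 2)
    (hz : lin ℓ z = 0) (hm : lin m₁ z = 0) {w : Fin 3 → ℂ} (hw : lin ℓ w = 0) :
    ∑ i, w i * eval z (pderiv i (cmap f)) = 0 := by
  have key : lineComp z w (cmap f) = Polynomial.X ^ 2 *
      (Polynomial.C (c * (lin m₁ w) ^ 2) *
        (Polynomial.C (lin m₂ z) + Polynomial.C (lin m₂ w) * Polynomial.X) ^ 2) := by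
    apply Polynomial.funext
    intro t
    rw [lineComp_eval]
    have hzw : lin ℓ (fun i => z i + t * w i) = 0 := by
      rw [lin_add_mul, hz, hw]; ring
    have h1 := hline _ hzw
    rw [cev] at h1
    rw [h1, lin_add_mul, lin_add_mul, hm]
    simp only [Polynomial.eval_mul, Polynomial.eval_pow, Polynomial.eval_add, Polynomial.eval_C,
      Polynomial.eval_X]
    ring
  have h2 := congrArg (fun q => Polynomial.coeff q 1) key
  rw [lineComp_coeff1] at h2
  rw [h2, pow_two, mul_assoc, Polynomial.coeff_X_mul, Polynomial.mul_coeff_zero,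
    Polynomial.coeff_X_zero, zero_mul]

lemma grad_prop (f : MvPolynomial (Fin 3) ℝ) (hsm : SmoothQuartic f)
    {ℓ z m₁ m₂ : Fin 3 → ℂ} {c : ℂ} (hℓ : ℓ ≠ 0) (hz0 : z ≠ 0)
    (hz : lin ℓ z = 0) (hm : lin m₁ z = 0)
    (hline : ∀ p, lin ℓ p = 0 → cev f p = c * (lin m₁ p * lin m₂ p) ^ 2) :
    ∃ μ : ℂ, μ ≠ 0 ∧ ∀ i, eval z (pderiv i (cmap f)) = μ * ℓ i := by
  have hfz : cev f z = 0 := by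
    rw [hline z hz, hm]; ring
  obtain ⟨k, hk⟩ := hsm z hz0 hfz
  obtain ⟨μ, hμ⟩ := ker_le_ker (g := fun i => eval z (pderiv i (cmap f))) hℓ (fun w hw => by
    have := grad_vanish f hline hz hm hw
    rw [lin_comm]
    simpa [lin] using this)
  refine ⟨μ, ?_, fun i => congrFun hμ i⟩
  intro h0
  apply hk
  have := congrFun hμ k
  simp only [h0, Pi.smul_apply, smul_eq_mul, zero_mul] at this
  exact this

lemma cvec_ne_zero {p : Fin 3 → ℝ} (hp : p ≠ 0) : cvec p ≠ 0 := by
  intro h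
  apply hp
  funext i
  have := congrFun h i
  simpa [cvec] using this

lemma lin_cvec (a b : Fin 3 → ℝ) : lin (cvec a) (cvec b) = ((lin a b : ℝ) : ℂ) := by
  simp [lin, cvec]

lemma cvec_prop {p q : Fin 3 → ℝ} (hp : p ≠ 0) {u : ℂ} (h : cvec q = u • cvec p) :
    ∃ t : ℝ, q = t • p := by
  obtain ⟨k, hk⟩ : ∃ k, p k ≠ 0 := by
    by_contra hc; push_neg at hc; exact hp (funext hc)
  have hk' : (p k : ℂ) ≠ 0 := by exact_mod_cast hk
  have hku := congrFun h k
  simp only [cvec, Pi.smul_apply, smul_eq_mul] at hku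
  have hu : u = ((q k / p k : ℝ) : ℂ) := by
    push_cast
    rw [eq_div_iff hk']
    linear_combination -hku
  refine ⟨q k / p k, funext fun i => ?_⟩
  have hi := congrFun h i
  simp only [cvec, Pi.smul_apply, smul_eq_mul, hu] at hi
  have : (q i : ℂ) = ((q k / p k * p i : ℝ) : ℂ) := by push_cast at hi ⊢; linear_combination hi
  have := Complex.ofReal_injective this
  simpa [Pi.smul_apply] using this

lemma Dv_scaled (f : MvPolynomial (Fin 3) ℝ) (hf : f.IsHomogeneous 4) (ℓ q : Fin 3 → ℝ)
    (rq : ℝ) (hg : ∀ i, eval q (pderiv i f) = rq * ℓ i) (t : ℂ) (v : Fin 3 → ℝ) :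
    Dv f v (t • cvec q) = t ^ 3 * (rq : ℂ) * ((lin ℓ v : ℝ) : ℂ) := by
  have h4 : (cmap f).IsHomogeneous 4 := hf.map _
  have h3 : ∀ i, (pderiv i (cmap f)).IsHomogeneous 3 := fun i => homog_pderiv h4 i
  have he : ∀ i, eval (t • cvec q) (pderiv i (cmap f)) = t ^ 3 * ((rq * ℓ i : ℝ) : ℂ) := by
    intro i
    rw [homog_eval_smul (h3 i) t (cvec q), pderiv_cmap, cev_real, hg i]
  rw [Dv]
  simp only [he]
  have hl : ((lin ℓ v : ℝ) : ℂ) = ∑ i, (ℓ i : ℂ) * (v i : ℂ) := by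
    simp [lin]
  rw [hl, Finset.mul_sum]
  apply Finset.sum_congr rfl
  intro i _
  push_cast
  ring

lemma qtype_char (f : MvPolynomial (Fin 3) ℝ) (hf : f.IsHomogeneous 4)
    (ℓ n p₁ p₂ : Fin 3 → ℝ) (hp₁ : p₁ ≠ 0) (hp₂ : p₂ ≠ 0)
    (hdist : ¬ ∃ t : ℝ, p₂ = t • p₁)
    (hbt : IsBitangentAt f (cvec ℓ) (cvec p₁) (cvec p₂))
    (r₁ r₂ : ℝ) (hr₁0 : r₁ ≠ 0) (hr₂0 : r₂ ≠ 0)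
    (hg₁ : ∀ i, eval p₁ (pderiv i f) = r₁ * ℓ i)
    (hg₂ : ∀ i, eval p₂ (pderiv i f) = r₂ * ℓ i)
    (hn1 : lin n p₁ ≠ 0) (hn2 : lin n p₂ ≠ 0) (ε : ℤ) :
    HasQtype f n (cvec ℓ) ε ↔
      ε = (if 0 < r₁ * r₂ * (lin n p₁ * lin n p₂) then 1 else -1) := by
  obtain ⟨hcl0, hz10, hz20, hlp1, hlp2, m₁, m₂, c, hc, hm1, hm2, hq1, hq2, hline⟩ := hbt
  have hℓ : ℓ ≠ 0 := by
    intro h0; apply hcl0; rw [h0]; funext i; simp [cvec]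
  obtain ⟨k, hk⟩ : ∃ k, ℓ k ≠ 0 := by
    by_contra hc'; push_neg at hc'; exact hℓ (funext hc')
  set W : ℝ := lin n p₁ * lin n p₂ with hW
  have hW0 : W ≠ 0 := mul_ne_zero hn1 hn2
  set S : ℝ := r₁ * r₂ with hS
  have hS0 : S ≠ 0 := mul_ne_zero hr₁0 hr₂0
  -- sign analysis helper
  have sign_key : ∀ lv r : ℝ, lv ≠ 0 →
      r = (lin n p₁)⁻¹ ^ 3 * (lin n p₂)⁻¹ ^ 3 * S * lv ^ 2 →
      (0 < r ↔ 0 < S * W) ∧ r ≠ 0 := by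
    intro lv r hlv hr
    have hfact : r = (S * W) * (lv * W⁻¹ * W⁻¹) ^ 2 := by
      rw [hr, hW]
      field_simp
    have hK : 0 < (lv * W⁻¹ * W⁻¹) ^ 2 := by positivity
    constructor
    · rw [hfact]
      exact mul_pos_iff_of_pos_right hK
    · rw [hfact]
      exact mul_ne_zero (mul_ne_zero hS0 hW0) (by positivity)
  constructor
  · -- uniqueness direction
    rintro ⟨z₁, z₂, v, r, hbt', hnz1, hnz2, hv, hprod, hsign⟩
    obtain ⟨_, hz10', hz20', hlz1, hlz2, m₁', m₂', c', hc', hm1', hm2', hq1', hq2', hline'⟩ := hbt'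
    have hlv : lin ℓ v ≠ 0 := by
      intro h0; apply hv; rw [lin_cvec, h0]; simp
    -- each tangency point of the witness is one of ours
    have hzcases : ∀ z : Fin 3 → ℂ, z ≠ 0 → lin (cvec ℓ) z = 0 → cev f z = 0 →
        (∃ t : ℂ, z = t • cvec p₁) ∨ (∃ t : ℂ, z = t • cvec p₂) := by
      intro z hz0 hlz hfz
      have h0 : c * (lin m₁ z * lin m₂ z) ^ 2 = 0 := by rw [← hline z hlz, hfz]
      have h1 : lin m₁ z = 0 ∨ lin m₂ z = 0 := by
        rcases mul_eq_zero.mp h0 with h | h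
        · exact absurd h hc
        · exact mul_eq_zero.mp (pow_eq_zero_iff (n := 2) (by norm_num) |>.mp h)
      rcases h1 with h | h
      · exact Or.inl (line_point_unique hcl0 (cvec_ne_zero hp₁) hlp1 hm1 hq1 hlz h)
      · exact Or.inr (line_point_unique hcl0 (cvec_ne_zero hp₂) hlp2 hm2 hq2 hlz h)
    have hfz1 : cev f z₁ = 0 := by
      rw [hline' z₁ hlz1, hm1']; ring
    have hfz2 : cev f z₂ = 0 := by
      rw [hline' z₂ hlz2, hm2']; ring
    -- the two witness points cannot both lie over the same real point
    have hnotsame₁ : ¬ ((∃ t : ℂ, z₁ = t • cvec p₁) ∧ (∃ t : ℂ, z₂ = t • cvec p₁)) := by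
      rintro ⟨⟨t₁, ht₁⟩, ⟨t₂, ht₂⟩⟩
      have hfp2 : cev f (cvec p₂) = 0 := by rw [hline _ hlp2, hm2]; ring
      have h0 : c' * (lin m₁' (cvec p₂) * lin m₂' (cvec p₂)) ^ 2 = 0 := by
        rw [← hline' _ hlp2, hfp2]
      have h1 : lin m₁' (cvec p₂) = 0 ∨ lin m₂' (cvec p₂) = 0 := by
        rcases mul_eq_zero.mp h0 with h | h
        · exact absurd h hc'
        · exact mul_eq_zero.mp (pow_eq_zero_iff (n := 2) (by norm_num) |>.mp h)
      have habs : ∃ u : ℂ, cvec p₂ = u • cvec p₁ := by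
        rcases h1 with h | h
        · obtain ⟨s, hs⟩ := line_point_unique hcl0 hz10' hlz1 hm1' hq1' hlp2 h
          exact ⟨s * t₁, by rw [hs, ht₁, smul_smul]⟩
        · obtain ⟨s, hs⟩ := line_point_unique hcl0 hz20' hlz2 hm2' hq2' hlp2 h
          exact ⟨s * t₂, by rw [hs, ht₂, smul_smul]⟩
      obtain ⟨u, hu⟩ := habs
      exact hdist (cvec_prop hp₁ hu)
    have hnotsame₂ : ¬ ((∃ t : ℂ, z₁ = t • cvec p₂) ∧ (∃ t : ℂ, z₂ = t • cvec p₂)) := by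
      rintro ⟨⟨t₁, ht₁⟩, ⟨t₂, ht₂⟩⟩
      have hfp1 : cev f (cvec p₁) = 0 := by rw [hline _ hlp1, hm1]; ring
      have h0 : c' * (lin m₁' (cvec p₁) * lin m₂' (cvec p₁)) ^ 2 = 0 := by
        rw [← hline' _ hlp1, hfp1]
      have h1 : lin m₁' (cvec p₁) = 0 ∨ lin m₂' (cvec p₁) = 0 := by
        rcases mul_eq_zero.mp h0 with h | h
        · exact absurd h hc'
        · exact mul_eq_zero.mp (pow_eq_zero_iff (n := 2) (by norm_num) |>.mp h)
      have habs : ∃ u : ℂ, cvec p₁ = u • cvec p₂ := by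
        rcases h1 with h | h
        · obtain ⟨s, hs⟩ := line_point_unique hcl0 hz10' hlz1 hm1' hq1' hlp1 h
          exact ⟨s * t₁, by rw [hs, ht₁, smul_smul]⟩
        · obtain ⟨s, hs⟩ := line_point_unique hcl0 hz20' hlz2 hm2' hq2' hlp1 h
          exact ⟨s * t₂, by rw [hs, ht₂, smul_smul]⟩
      obtain ⟨u, hu⟩ := habs
      obtain ⟨t, ht⟩ := cvec_prop hp₂ hu
      apply hdist
      have ht0 : t ≠ 0 := by
        intro h0; apply hp₁; rw [ht, h0, zero_smul]
      exact ⟨t⁻¹, by rw [ht, smul_smul, inv_mul_cancel₀ ht0, one_smul]⟩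
    -- the normalized-point computation
    have hcompute : ∀ (qa qb : Fin 3 → ℝ) (ra rb : ℝ),
        (∀ i, eval qa (pderiv i f) = ra * ℓ i) → (∀ i, eval qb (pderiv i f) = rb * ℓ i) →
        lin n qa ≠ 0 → lin n qb ≠ 0 →
        (∃ t : ℂ, z₁ = t • cvec qa) → (∃ t : ℂ, z₂ = t • cvec qb) →
        r = (lin n qa)⁻¹ ^ 3 * (lin n qb)⁻¹ ^ 3 * (ra * rb) * (lin ℓ v) ^ 2 := by
      rintro qa qb ra rb hga hgb hna hnb ⟨t₁, ht₁⟩ ⟨t₂, ht₂⟩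
      have hta : t₁ = (((lin n qa)⁻¹ : ℝ) : ℂ) := by
        rw [ht₁, lin_smul, lin_cvec] at hnz1
        rw [eq_inv_of_mul_eq_one_left hnz1, Complex.ofReal_inv]
      have htb : t₂ = (((lin n qb)⁻¹ : ℝ) : ℂ) := by
        rw [ht₂, lin_smul, lin_cvec] at hnz2
        rw [eq_inv_of_mul_eq_one_left hnz2, Complex.ofReal_inv]
      have hD1 := Dv_scaled f hf ℓ qa ra hga t₁ v
      have hD2 := Dv_scaled f hf ℓ qb rb hgb t₂ v
      rw [← ht₁] at hD1
      rw [← ht₂] at hD2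
      have : (r : ℂ) = (((lin n qa)⁻¹ ^ 3 * (lin n qb)⁻¹ ^ 3 * (ra * rb) * (lin ℓ v) ^ 2 : ℝ) : ℂ) := by
        rw [← hprod, hD1, hD2, hta, htb]
        push_cast
        ring
      exact_mod_cast this
    -- case analysis
    have hcase1 := hzcases z₁ hz10' hlz1 hfz1
    have hcase2 := hzcases z₂ hz20' hlz2 hfz2
    have hr : r = (lin n p₁)⁻¹ ^ 3 * (lin n p₂)⁻¹ ^ 3 * S * (lin ℓ v) ^ 2 := by
      rcases hcase1 with h1 | h1 <;> rcases hcase2 with h2 | h2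
      · exact absurd ⟨h1, h2⟩ hnotsame₁
      · rw [hcompute p₁ p₂ r₁ r₂ hg₁ hg₂ hn1 hn2 h1 h2, hS]
      · rw [hcompute p₂ p₁ r₂ r₁ hg₂ hg₁ hn2 hn1 h1 h2, hS]; ring
      · exact absurd ⟨h1, h2⟩ hnotsame₂
    obtain ⟨hiff, hrne⟩ := sign_key (lin ℓ v) r hlv hr
    rcases hsign with ⟨hpos, hε⟩ | ⟨hneg, hε⟩
    · rw [hε, if_pos (hiff.mp hpos)]
    · have : ¬ (0 < S * W) := by
        intro h
        have := hiff.mpr h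
        linarith
      rw [hε, if_neg this]
  · -- existence direction
    intro hε
    set t₁ : ℝ := (lin n p₁)⁻¹ with ht₁
    set t₂ : ℝ := (lin n p₂)⁻¹ with ht₂
    set v : Fin 3 → ℝ := fun i => if i = k then 1 else 0 with hv
    have hlv : lin ℓ v = ℓ k := by
      simp [lin, hv, mul_ite, Finset.sum_ite_eq', Finset.mem_univ]
    set z₁ : Fin 3 → ℂ := ((t₁ : ℝ) : ℂ) • cvec p₁ with hz₁
    set z₂ : Fin 3 → ℂ := ((t₂ : ℝ) : ℂ) • cvec p₂ with hz₂
    set r : ℝ := t₁ ^ 3 * t₂ ^ 3 * S * (ℓ k) ^ 2 with hrdef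
    refine ⟨z₁, z₂, v, r, ?_, ?_, ?_, ?_, ?_, ?_⟩
    · refine ⟨hcl0, ?_, ?_, ?_, ?_, m₁, m₂, c, hc, ?_, ?_, hq1, hq2, hline⟩
      · exact smul_ne_zero (by exact_mod_cast inv_ne_zero hn1) (cvec_ne_zero hp₁)
      · exact smul_ne_zero (by exact_mod_cast inv_ne_zero hn2) (cvec_ne_zero hp₂)
      · rw [hz₁, lin_smul, hlp1, mul_zero]
      · rw [hz₂, lin_smul, hlp2, mul_zero]
      · rw [hz₁, lin_smul, hm1, mul_zero]
      · rw [hz₂, lin_smul, hm2, mul_zero]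
    · rw [hz₁, lin_smul, lin_cvec]
      have hca : ((lin n p₁ : ℝ) : ℂ) ≠ 0 := by exact_mod_cast hn1
      rw [ht₁]
      push_cast
      exact inv_mul_cancel₀ hca
    · rw [hz₂, lin_smul, lin_cvec]
      have hca : ((lin n p₂ : ℝ) : ℂ) ≠ 0 := by exact_mod_cast hn2
      rw [ht₂]
      push_cast
      exact inv_mul_cancel₀ hca
    · rw [lin_cvec, hlv]
      exact_mod_cast hk
    · rw [hz₁, hz₂, Dv_scaled f hf ℓ p₁ r₁ hg₁ _ v, Dv_scaled f hf ℓ p₂ r₂ hg₂ _ v, hlv, hrdef, hS]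
      push_cast
      ring
    · have hr : r = (lin n p₁)⁻¹ ^ 3 * (lin n p₂)⁻¹ ^ 3 * S * (lin ℓ v) ^ 2 := by
        rw [hrdef, hlv, ht₁, ht₂]
      have hlv0 : lin ℓ v ≠ 0 := by rw [hlv]; exact hk
      obtain ⟨hiff, hrne⟩ := sign_key (lin ℓ v) r hlv0 hr
      by_cases hpos : 0 < S * W
      · left
        exact ⟨hiff.mpr hpos, by rw [hε, if_pos hpos]⟩
      · right
        refine ⟨?_, by rw [hε, if_neg hpos]⟩
        rcases lt_trichotomy r 0 with h | h | h
        · exact h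
        · exact absurd h hrne
        · exact absurd (hiff.mp h) hpos

/-- Let `L = V(ℓ)` be a split real bitangent of the smooth quartic
`V(f)` with distinct real tangency points represented by `p₁, p₂ ∈ ℝ³ ∖ {0}`, and let
`L∞ = V(ℓinf)`, `M = V(ℓM)` be real lines avoiding the tangency points.  Then the
Qtypes of `L` relative to `L∞` and to `M` are defined, and
`Qtype_{L∞}(L)·Qtype_M(L) = sign(ℓ∞(p₁)·ℓ∞(p₂)·ℓ_M(p₁)·ℓ_M(p₂))`; equivalently the
two Qtypes agree iff `ℓ∞(p₁)·ℓ∞(p₂)·ℓ_M(p₁)·ℓ_M(p₂) > 0`, i.e. iff `L∞` does not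
separate `p₁` from `p₂` in `ℙ²(ℝ) ∖ M` (does not meet the grate of `L` w.r.t. `M`). -/
theorem statement9 (f : MvPolynomial (Fin 3) ℝ) (hf : f.IsHomogeneous 4)
    (hsm : SmoothQuartic f)
    (ℓ ℓinf ℓM : Fin 3 → ℝ) (hℓ : ℓ ≠ 0) (hinf : ℓinf ≠ 0) (hM : ℓM ≠ 0)
    (p₁ p₂ : Fin 3 → ℝ) (hp₁ : p₁ ≠ 0) (hp₂ : p₂ ≠ 0)
    (hdist : ¬ ∃ t : ℝ, p₂ = t • p₁)
    (hbt : IsBitangentAt f (cvec ℓ) (cvec p₁) (cvec p₂))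
    (hinf1 : lin ℓinf p₁ ≠ 0) (hinf2 : lin ℓinf p₂ ≠ 0)
    (hM1 : lin ℓM p₁ ≠ 0) (hM2 : lin ℓM p₂ ≠ 0) :
    (∃! ε : ℤ, HasQtype f ℓinf (cvec ℓ) ε) ∧
    (∃! ε : ℤ, HasQtype f ℓM (cvec ℓ) ε) ∧
    ∀ ε₁ ε₂ : ℤ, HasQtype f ℓinf (cvec ℓ) ε₁ → HasQtype f ℓM (cvec ℓ) ε₂ →
      (((ε₁ * ε₂ : ℤ) : ℝ) =
          Real.sign (lin ℓinf p₁ * lin ℓinf p₂ * lin ℓM p₁ * lin ℓM p₂) ∧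
       (ε₁ = ε₂ ↔ 0 < lin ℓinf p₁ * lin ℓinf p₂ * lin ℓM p₁ * lin ℓM p₂)) := by
  obtain ⟨hcl0, hz10, hz20, hlp1, hlp2, m₁, m₂, c, hc, hm1, hm2, hq1, hq2, hline⟩ := id hbt
  obtain ⟨k, hk⟩ : ∃ k, ℓ k ≠ 0 := by
    by_contra hc'; push_neg at hc'; exact hℓ (funext hc')
  have hkc : ((ℓ k : ℝ) : ℂ) ≠ 0 := by exact_mod_cast hk
  -- real gradient proportionality at p₁
  have hline2 : ∀ p, lin (cvec ℓ) p = 0 → cev f p = c * (lin m₂ p * lin m₁ p) ^ 2 := by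
    intro p hp; rw [hline p hp]; ring
  obtain ⟨μ₁, hμ₁0, hμ₁⟩ := grad_prop f hsm hcl0 (cvec_ne_zero hp₁) hlp1 hm1 hline
  obtain ⟨μ₂, hμ₂0, hμ₂⟩ := grad_prop f hsm hcl0 (cvec_ne_zero hp₂) hlp2 hm2 hline2
  have hE₁ : ∀ i, ((eval p₁ (pderiv i f) : ℝ) : ℂ) = μ₁ * ((ℓ i : ℝ) : ℂ) := by
    intro i
    rw [← cev_real, ← pderiv_cmap]
    exact hμ₁ i
  have hE₂ : ∀ i, ((eval p₂ (pderiv i f) : ℝ) : ℂ) = μ₂ * ((ℓ i : ℝ) : ℂ) := by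
    intro i
    rw [← cev_real, ← pderiv_cmap]
    exact hμ₂ i
  set r₁ : ℝ := eval p₁ (pderiv k f) / ℓ k with hr₁def
  set r₂ : ℝ := eval p₂ (pderiv k f) / ℓ k with hr₂def
  have hμr₁ : μ₁ = ((r₁ : ℝ) : ℂ) := by
    rw [hr₁def]
    push_cast
    rw [eq_div_iff hkc]
    linear_combination -hE₁ k
  have hμr₂ : μ₂ = ((r₂ : ℝ) : ℂ) := by
    rw [hr₂def]
    push_cast
    rw [eq_div_iff hkc]
    linear_combination -hE₂ k
  have hr₁0 : r₁ ≠ 0 := by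
    intro h0; apply hμ₁0; rw [hμr₁, h0]; simp
  have hr₂0 : r₂ ≠ 0 := by
    intro h0; apply hμ₂0; rw [hμr₂, h0]; simp
  have hg₁ : ∀ i, eval p₁ (pderiv i f) = r₁ * ℓ i := by
    intro i
    have := hE₁ i
    rw [hμr₁] at this
    exact_mod_cast this
  have hg₂ : ∀ i, eval p₂ (pderiv i f) = r₂ * ℓ i := by
    intro i
    have := hE₂ i
    rw [hμr₂] at this
    exact_mod_cast this
  have char_inf := fun ε => qtype_char f hf ℓ ℓinf p₁ p₂ hp₁ hp₂ hdist hbt r₁ r₂ hr₁0 hr₂0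
    hg₁ hg₂ hinf1 hinf2 ε
  have char_M := fun ε => qtype_char f hf ℓ ℓM p₁ p₂ hp₁ hp₂ hdist hbt r₁ r₂ hr₁0 hr₂0
    hg₁ hg₂ hM1 hM2 ε
  refine ⟨⟨_, (char_inf _).mpr rfl, fun ε h => (char_inf ε).mp h⟩,
    ⟨_, (char_M _).mpr rfl, fun ε h => (char_M ε).mp h⟩, ?_⟩
  intro ε₁ ε₂ h1 h2
  rw [(char_inf ε₁).mp h1, (char_M ε₂).mp h2]
  set S : ℝ := r₁ * r₂ with hSdef
  set A : ℝ := lin ℓinf p₁ * lin ℓinf p₂ with hAdef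
  set B : ℝ := lin ℓM p₁ * lin ℓM p₂ with hBdef
  have hS0 : S ≠ 0 := mul_ne_zero hr₁0 hr₂0
  have hA0 : A ≠ 0 := mul_ne_zero hinf1 hinf2
  have hB0 : B ≠ 0 := mul_ne_zero hM1 hM2
  have hprod4 : lin ℓinf p₁ * lin ℓinf p₂ * lin ℓM p₁ * lin ℓM p₂ = A * B := by
    rw [hAdef, hBdef]; ring
  rw [hprod4]
  have hSsq : 0 < S ^ 2 := by positivity
  rcases (mul_ne_zero hS0 hA0).lt_or_gt with hSA | hSA <;>
    rcases (mul_ne_zero hS0 hB0).lt_or_gt with hSB | hSB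
  · have hAB : 0 < A * B := by
      have h1 : 0 < S ^ 2 * (A * B) := by nlinarith
      exact (mul_pos_iff_of_pos_left hSsq).mp h1
    rw [if_neg (not_lt.mpr hSA.le), if_neg (not_lt.mpr hSB.le), Real.sign_of_pos hAB]
    exact ⟨by norm_num, iff_of_true rfl hAB⟩
  · have hAB : A * B < 0 := by
      have h1 : S ^ 2 * (A * B) < 0 := by nlinarith
      by_contra hcon
      push_neg at hcon
      nlinarith
    rw [if_neg (not_lt.mpr hSA.le), if_pos hSB, Real.sign_of_neg hAB]
    exact ⟨by norm_num, iff_of_false (by decide) (not_lt.mpr hAB.le)⟩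
  · have hAB : A * B < 0 := by
      have h1 : S ^ 2 * (A * B) < 0 := by nlinarith
      by_contra hcon
      push_neg at hcon
      nlinarith
    rw [if_pos hSA, if_neg (not_lt.mpr hSB.le), Real.sign_of_neg hAB]
    exact ⟨by norm_num, iff_of_false (by decide) (not_lt.mpr hAB.le)⟩
  · have hAB : 0 < A * B := by
      have h1 : 0 < S ^ 2 * (A * B) := by nlinarith
      exact (mul_pos_iff_of_pos_left hSsq).mp h1
    rw [if_pos hSA, if_pos hSB, Real.sign_of_pos hAB]
    exact ⟨by norm_num, iff_of_true rfl hAB⟩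

end
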